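/- Let G be a simple graph on n vertices with maximum degree at most d, let S₁, S₂ be disjoint nonempty subsets of V, let 0 < θ < 1, and for i = 1, 2 let Tᵢ ⊆ Sᵢ be nonempty with |Tᵢ| ≥ (1 − θ)|Sᵢ|. Then for all reals α, β: ‖(αq_{S₁}⁰ + βq_{S₂}⁰) − (αq_{T₁}⁰ + βq_{T₂}⁰)‖² ≤ (θ/(1 − θ))·(α²/|S₁| + β²/|S₂|). -/

import Mathlib

open scoped RealInnerProductSpace

open scoped Classical in
/-- The lazy random walk matrix of a graph `G` with degree parameter `d`. -/
noncomputable def lazyWalk {n : ℕ} (G : SimpleGraph (Fin n)) (d : ℕ) :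
    Matrix (Fin n) (Fin n) ℝ :=
  Matrix.of fun u v =>
    if u = v then 1 - ((G.neighborSet u).ncard : ℝ) / (2 * d)
    else if G.Adj u v then 1 / (2 * d) else 0

/-- `G` has maximum degree at most `d`. -/
def MaxDegreeLE {n : ℕ} (G : SimpleGraph (Fin n)) (d : ℕ) : Prop :=
  ∀ v, (G.neighborSet v).ncard ≤ d

/-- `p_u^t`: the endpoint distribution of a length-`t` lazy random walk from `u`. -/
noncomputable def pvec {n : ℕ} (G : SimpleGraph (Fin n)) (d t : ℕ) (u : Fin n) :
    EuclideanSpace ℝ (Fin n) :=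
  WithLp.toLp 2 (fun v => ((lazyWalk G d ^ t).mulVec fun w => if w = u then 1 else 0) v)

/-- `q_u^t = p_u^t - (1/n) 𝟙`. -/
noncomputable def qvec {n : ℕ} (G : SimpleGraph (Fin n)) (d t : ℕ) (u : Fin n) :
    EuclideanSpace ℝ (Fin n) :=
  WithLp.toLp 2 (fun v => pvec G d t u v - 1 / n)

/-- `q_u^0 = 1_u - (1/n) 𝟙`. -/
noncomputable def qzero {n : ℕ} (u : Fin n) : EuclideanSpace ℝ (Fin n) :=
  WithLp.toLp 2 (fun v => ((if v = u then 1 else 0) - 1 / n : ℝ))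

/-- average of `q_u^0` over `u ∈ S`. -/
noncomputable def qavg {n : ℕ} (S : Finset (Fin n)) : EuclideanSpace ℝ (Fin n) :=
  (S.card : ℝ)⁻¹ • ∑ u ∈ S, qzero u

/-- `a` and `b` are `ε`-close to collinear. -/
def CloseCollinear {E : Type*} [NormedAddCommGroup E] [NormedSpace ℝ E]
    (ε : ℝ) (a b : E) : Prop :=
  ∃ (ea eb w : E) (s s' : ℝ),
    ‖ea‖ ≤ ε ∧ ‖eb‖ ≤ ε ∧ a + ea = s • w ∧ b + eb = s' • w

/-- `a` and `b` are `ε`-close to antipodal. -/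
def CloseAntipodal {E : Type*} [NormedAddCommGroup E] [NormedSpace ℝ E]
    (ε : ℝ) (a b : E) : Prop :=
  ∃ (ea eb w : E) (s s' : ℝ), 0 ≤ s ∧ 0 ≤ s' ∧
    ‖ea‖ ≤ ε ∧ ‖eb‖ ≤ ε ∧ a + ea = s • w ∧ b + eb = -(s' • w)

/-- `a` and `b` are `ε`-close to podal. -/
def ClosePodal {E : Type*} [NormedAddCommGroup E] [NormedSpace ℝ E]
    (ε : ℝ) (a b : E) : Prop :=
  ∃ (ea eb w : E) (s s' : ℝ), 0 ≤ s ∧ 0 ≤ s' ∧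
    ‖ea‖ ≤ ε ∧ ‖eb‖ ≤ ε ∧ a + ea = s • w ∧ b + eb = s' • w

/-- The Gram matrix `A_{u,v}` of two vectors. -/
noncomputable def gram2 {n : ℕ} (a b : EuclideanSpace ℝ (Fin n)) :
    Matrix (Fin 2) (Fin 2) ℝ :=
  !![‖a‖ ^ 2, ⟪a, b⟫; ⟪b, a⟫, ‖b‖ ^ 2]

/-- Number of edges of `G` between `S` and `C \ S` (for `S ⊆ C`). -/
noncomputable def cutEdgesIn {n : ℕ} (G : SimpleGraph (Fin n)) (C S : Finset (Fin n)) : ℕ :=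
  {p : Fin n × Fin n | p.1 ∈ S ∧ p.2 ∈ C ∧ p.2 ∉ S ∧ G.Adj p.1 p.2}.ncard

/-- Number of edges of `G` between `S` and its complement. -/
noncomputable def cutEdges {n : ℕ} (G : SimpleGraph (Fin n)) (S : Finset (Fin n)) : ℕ :=
  cutEdgesIn G Finset.univ S

/-- The cut conductance `φ_G(S) = e(S, V∖S) / (d|S|)`. -/
noncomputable def cutCond {n : ℕ} (G : SimpleGraph (Fin n)) (d : ℕ) (S : Finset (Fin n)) : ℝ :=
  (cutEdges G S : ℝ) / (d * S.card)

/-- The (inner) conductance of the induced subgraph `G[C]` is at least `φ`. -/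
def InnerConductanceGE {n : ℕ} (G : SimpleGraph (Fin n)) (d : ℕ) (C : Finset (Fin n))
    (φ : ℝ) : Prop :=
  ∀ S ⊆ C, S.Nonempty → 2 * S.card ≤ C.card →
    φ ≤ (cutEdgesIn G C S : ℝ) / (d * S.card)

/-- `G` is `(2, φ)`-clusterable. -/
def Clusterable2 {n : ℕ} (G : SimpleGraph (Fin n)) (d : ℕ) (φ : ℝ) : Prop :=
  InnerConductanceGE G d Finset.univ φ ∨
  ∃ C₁ C₂ : Finset (Fin n), C₁.Nonempty ∧ C₂.Nonempty ∧ Disjoint C₁ C₂ ∧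
    C₁ ∪ C₂ = Finset.univ ∧ InnerConductanceGE G d C₁ φ ∧ InnerConductanceGE G d C₂ φ

/-- `G` is `ε`-far from `(2, φ)`-clusterable. -/
def FarFromClusterable2 {n : ℕ} (G : SimpleGraph (Fin n)) (d : ℕ) (ε φ : ℝ) : Prop :=
  ∀ G' : SimpleGraph (Fin n), MaxDegreeLE G' d →
    ((symmDiff G.edgeSet G'.edgeSet).ncard : ℝ) ≤ ε * d * n →
    ¬ Clusterable2 G' d φ

/-- The span of the eigenvectors of `M` with eigenvalue greater than `c`. -/
noncomputable def heavySpace {n : ℕ} (M : Matrix (Fin n) (Fin n) ℝ) (c : ℝ) :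
    Submodule ℝ (EuclideanSpace ℝ (Fin n)) :=
  ⨆ μ : {μ : ℝ // c < μ}, Module.End.eigenspace (Matrix.toEuclideanLin M) (μ : ℝ)

/-- Orthogonal projection onto the span of the eigenvectors of `M` with eigenvalue
greater than `c`. -/
noncomputable def heavyProj {n : ℕ} (M : Matrix (Fin n) (Fin n) ℝ) (c : ℝ)
    (x : EuclideanSpace ℝ (Fin n)) : EuclideanSpace ℝ (Fin n) :=
  (Submodule.orthogonalProjection (heavySpace M c) x : EuclideanSpace ℝ (Fin n))


private lemma euclid_sum_apply {n : ℕ} (S : Finset (Fin n))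
    (f : Fin n → EuclideanSpace ℝ (Fin n)) (v : Fin n) :
    (∑ u ∈ S, f u) v = ∑ u ∈ S, f u v := by
  induction S using Finset.cons_induction with
  | empty => rfl
  | cons a s ha ih => rw [Finset.sum_cons, Finset.sum_cons, ← ih]; rfl

private lemma qavg_apply {n : ℕ} (S : Finset (Fin n)) (hS : S.Nonempty) (v : Fin n) :
    qavg S v = (if v ∈ S then (S.card : ℝ)⁻¹ else 0) - 1 / n := by
  have hc : (S.card : ℝ) ≠ 0 := Nat.cast_ne_zero.mpr hS.card_pos.ne'
  have h1 : (∑ u ∈ S, qzero u) v = (if v ∈ S then (1:ℝ) else 0) - S.card * (n:ℝ)⁻¹ := by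
    rw [euclid_sum_apply]
    simp [qzero, Finset.sum_sub_distrib, div_eq_mul_inv]
  simp only [qavg, PiLp.smul_apply, smul_eq_mul, h1]
  by_cases hv : v ∈ S <;> simp [hv] <;> field_simp <;> ring

private lemma sum_sq_diff {n : ℕ} (S T : Finset (Fin n)) (hT : T ⊆ S) (hTne : T.Nonempty) :
    ∑ v : Fin n, ((if v ∈ S then (S.card : ℝ)⁻¹ else 0)
        - (if v ∈ T then (T.card : ℝ)⁻¹ else 0)) ^ 2
      = (T.card : ℝ)⁻¹ - (S.card : ℝ)⁻¹ := by
  have hSne : S.Nonempty := hTne.mono hT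
  have hcS : (S.card : ℝ) ≠ 0 := Nat.cast_ne_zero.mpr hSne.card_pos.ne'
  have hcT : (T.card : ℝ) ≠ 0 := Nat.cast_ne_zero.mpr hTne.card_pos.ne'
  set s : ℝ := (S.card : ℝ)⁻¹
  set t : ℝ := (T.card : ℝ)⁻¹
  have hpt : ∀ v : Fin n,
      ((if v ∈ S then s else 0) - (if v ∈ T then t else 0)) ^ 2
        = (if v ∈ T then ((s - t) ^ 2 - s ^ 2) else 0) + (if v ∈ S then s ^ 2 else 0) := by
    intro v
    by_cases hv : v ∈ T
    · simp [hv, hT hv]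
    · by_cases hv' : v ∈ S <;> simp [hv, hv']
  calc ∑ v : Fin n, ((if v ∈ S then s else 0) - (if v ∈ T then t else 0)) ^ 2
      = ∑ v : Fin n, ((if v ∈ T then ((s - t) ^ 2 - s ^ 2) else 0)
          + (if v ∈ S then s ^ 2 else 0)) := Finset.sum_congr rfl fun v _ => hpt v
    _ = (T.card : ℝ) * ((s - t) ^ 2 - s ^ 2) + (S.card : ℝ) * s ^ 2 := by
        rw [Finset.sum_add_distrib, Finset.sum_ite_mem, Finset.sum_ite_mem,
          Finset.univ_inter, Finset.univ_inter, Finset.sum_const, Finset.sum_const]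
        simp [nsmul_eq_mul]
    _ = t - s := by
        have hTt : (T.card : ℝ) * t = 1 := mul_inv_cancel₀ hcT
        have hSs : (S.card : ℝ) * s = 1 := mul_inv_cancel₀ hcS
        linear_combination (t - 2 * s) * hTt + s * hSs

theorem stmt13 {n d : ℕ} (hd : 1 ≤ d) (G : SimpleGraph (Fin n)) (hdeg : MaxDegreeLE G d)
    (S₁ S₂ : Finset (Fin n)) (h1 : S₁.Nonempty) (h2 : S₂.Nonempty) (hdisj : Disjoint S₁ S₂)
    (θ : ℝ) (hθ0 : 0 < θ) (hθ1 : θ < 1)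
    (T₁ T₂ : Finset (Fin n)) (hT1 : T₁ ⊆ S₁) (hT2 : T₂ ⊆ S₂)
    (hT1ne : T₁.Nonempty) (hT2ne : T₂.Nonempty)
    (hT1c : (1 - θ) * S₁.card ≤ T₁.card) (hT2c : (1 - θ) * S₂.card ≤ T₂.card)
    (α β : ℝ) :
    ‖(α • qavg S₁ + β • qavg S₂) - (α • qavg T₁ + β • qavg T₂)‖ ^ 2 ≤
      (θ / (1 - θ)) * (α ^ 2 / S₁.card + β ^ 2 / S₂.card) := by
  have hS1c : (0:ℝ) < S₁.card := by exact_mod_cast h1.card_pos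
  have hS2c : (0:ℝ) < S₂.card := by exact_mod_cast h2.card_pos
  have hT1cpos : (0:ℝ) < T₁.card := by exact_mod_cast hT1ne.card_pos
  have hT2cpos : (0:ℝ) < T₂.card := by exact_mod_cast hT2ne.card_pos
  have h1θ : (0:ℝ) < 1 - θ := by linarith
  set w₁ : Fin n → ℝ := fun v =>
    (if v ∈ S₁ then (S₁.card : ℝ)⁻¹ else 0) - (if v ∈ T₁ then (T₁.card : ℝ)⁻¹ else 0) with hw₁
  set w₂ : Fin n → ℝ := fun v =>
    (if v ∈ S₂ then (S₂.card : ℝ)⁻¹ else 0) - (if v ∈ T₂ then (T₂.card : ℝ)⁻¹ else 0) with hw₂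
  set x : EuclideanSpace ℝ (Fin n) :=
    (α • qavg S₁ + β • qavg S₂) - (α • qavg T₁ + β • qavg T₂) with hxdef
  have hx : ∀ v, x v = α * w₁ v + β * w₂ v := by
    intro v
    simp only [hxdef, PiLp.sub_apply, PiLp.add_apply, PiLp.smul_apply, smul_eq_mul,
      qavg_apply S₁ h1 v, qavg_apply S₂ h2 v, qavg_apply T₁ hT1ne v, qavg_apply T₂ hT2ne v,
      hw₁, hw₂]
    ring
  have hcross : ∀ v, w₁ v * w₂ v = 0 := by
    intro v
    by_cases hv : v ∈ S₁
    · have hv2 : v ∉ S₂ := fun h => (Finset.disjoint_left.mp hdisj hv) h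
      have hv2' : v ∉ T₂ := fun h => hv2 (hT2 h)
      simp [hw₂, hv2, hv2']
    · have hv1' : v ∉ T₁ := fun h => hv (hT1 h)
      simp [hw₁, hv, hv1']
  have hnorm : ‖x‖ ^ 2 = ∑ v : Fin n, x v ^ 2 := by
    rw [EuclideanSpace.norm_eq, Real.sq_sqrt (by positivity)]
    exact Finset.sum_congr rfl fun v _ => by rw [Real.norm_eq_abs, sq_abs]
  have hsum : ∑ v : Fin n, x v ^ 2
      = α ^ 2 * ((T₁.card : ℝ)⁻¹ - (S₁.card : ℝ)⁻¹)
        + β ^ 2 * ((T₂.card : ℝ)⁻¹ - (S₂.card : ℝ)⁻¹) := by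
    have : ∑ v : Fin n, x v ^ 2
        = ∑ v : Fin n, (α ^ 2 * w₁ v ^ 2 + β ^ 2 * w₂ v ^ 2) := by
      refine Finset.sum_congr rfl fun v _ => ?_
      rw [hx v]
      linear_combination (2 * α * β) * hcross v
    rw [this, Finset.sum_add_distrib, ← Finset.mul_sum, ← Finset.mul_sum,
      sum_sq_diff S₁ T₁ hT1 hT1ne, sum_sq_diff S₂ T₂ hT2 hT2ne]
  have hb1 : (T₁.card : ℝ)⁻¹ - (S₁.card : ℝ)⁻¹ ≤ θ / (1 - θ) * (S₁.card : ℝ)⁻¹ := by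
    have hineq : (T₁.card : ℝ)⁻¹ ≤ ((1 - θ) * S₁.card)⁻¹ := by
      apply inv_anti₀ (by positivity) hT1c
    have : ((1 - θ) * (S₁.card : ℝ))⁻¹ - (S₁.card : ℝ)⁻¹ = θ / (1 - θ) * (S₁.card : ℝ)⁻¹ := by
      field_simp
      ring
    linarith
  have hb2 : (T₂.card : ℝ)⁻¹ - (S₂.card : ℝ)⁻¹ ≤ θ / (1 - θ) * (S₂.card : ℝ)⁻¹ := by
    have hineq : (T₂.card : ℝ)⁻¹ ≤ ((1 - θ) * S₂.card)⁻¹ := by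
      apply inv_anti₀ (by positivity) hT2c
    have : ((1 - θ) * (S₂.card : ℝ))⁻¹ - (S₂.card : ℝ)⁻¹ = θ / (1 - θ) * (S₂.card : ℝ)⁻¹ := by
      field_simp
      ring
    linarith
  rw [hnorm, hsum]
  have e1 : α ^ 2 * ((T₁.card : ℝ)⁻¹ - (S₁.card : ℝ)⁻¹)
      ≤ α ^ 2 * (θ / (1 - θ) * (S₁.card : ℝ)⁻¹) :=
    mul_le_mul_of_nonneg_left hb1 (sq_nonneg α)
  have e2 : β ^ 2 * ((T₂.card : ℝ)⁻¹ - (S₂.card : ℝ)⁻¹)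
      ≤ β ^ 2 * (θ / (1 - θ) * (S₂.card : ℝ)⁻¹) :=
    mul_le_mul_of_nonneg_left hb2 (sq_nonneg β)
  have : θ / (1 - θ) * (α ^ 2 / S₁.card + β ^ 2 / S₂.card)
      = α ^ 2 * (θ / (1 - θ) * (S₁.card : ℝ)⁻¹) + β ^ 2 * (θ / (1 - θ) * (S₂.card : ℝ)⁻¹) := by
    field_simp
  linarith
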